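/- Let (X, dist) be a metric space, let E ⊆ X be a finite set, let R > 0 and r₀ ≥ 1/R. For each integer u ≥ 0, let Ê(u) be the set of all x ∈ E for which there exists a closed ball B = B̄(c, r) with 1/R ≤ r ≤ r₀, x ∈ B, and #(E ∩ B) ≥ R·2^u·r, and set E(u) = Ê(u) ∖ ⋃_{u' > u} Ê(u'). Then: (i) E is the disjoint union of the sets E(u), u ≥ 0 (and E(u) is empty once 2^u > #E); (ii) for every integer u ≥ 0 and every closed ball B of radius r with 1/R ≤ r ≤ r₀, one has #(E(u) ∩ B) ≤ 2·R·2^u·r. -/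

import Mathlib

open Metric Set

/-- `Ê(u)`: the set of points of `E` contained in some closed ball `B̄(c,r)` with
`1/R ≤ r ≤ r₀` and `#(E ∩ B̄(c,r)) ≥ R·2^u·r`. -/
def EhatSet {X : Type*} [MetricSpace X] (E : Set X) (R r₀ : ℝ) (u : ℕ) : Set X :=
  {x ∈ E | ∃ (c : X) (r : ℝ), 1 / R ≤ r ∧ r ≤ r₀ ∧ x ∈ Metric.closedBall c r ∧
      R * 2 ^ u * r ≤ ((E ∩ Metric.closedBall c r).ncard : ℝ)}

/-- `E(u) = Ê(u) ∖ ⋃_{u' > u} Ê(u')`. -/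
def EpartSet {X : Type*} [MetricSpace X] (E : Set X) (R r₀ : ℝ) (u : ℕ) : Set X :=
  EhatSet E R r₀ u \ ⋃ (u' : ℕ) (_ : u < u'), EhatSet E R r₀ u'

lemma Ehat_empty {X : Type*} [MetricSpace X] (E : Set X) (hE : E.Finite)
    {R : ℝ} (r₀ : ℝ) (hR : 0 < R) {u : ℕ} (hu : (E.ncard : ℝ) < 2 ^ u) :
    EhatSet E R r₀ u = ∅ := by
  ext x
  simp only [Set.mem_empty_iff_false, iff_false]
  rintro ⟨hxE, c, r, h1, h2, h3, h4⟩
  have hle : ((E ∩ Metric.closedBall c r).ncard : ℝ) ≤ (E.ncard : ℝ) := by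
    exact_mod_cast Set.ncard_le_ncard Set.inter_subset_left hE
  have : (2:ℝ) ^ u ≤ R * 2 ^ u * r := by
    have : R * 2 ^ u * (1/R) ≤ R * 2 ^ u * r := by
      apply mul_le_mul_of_nonneg_left h1; positivity
    calc (2:ℝ)^u = R * 2^u * (1/R) := by field_simp
    _ ≤ _ := this
  linarith

/-- Density decomposition: a finite set `E` in a metric space is the disjoint union of the
sets `E(u)`, `u ≥ 0` (with `E(u) = ∅` once `2^u > #E`), and each `E(u)` has controlled
density: `#(E(u) ∩ B̄(c,r)) ≤ 2·R·2^u·r` for every closed ball of radius `1/R ≤ r ≤ r₀`. -/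
theorem statement11 {X : Type*} [MetricSpace X] (E : Set X) (hE : E.Finite)
    (R r₀ : ℝ) (hR : 0 < R) (hr₀ : 1 / R ≤ r₀) :
    (⋃ u : ℕ, EpartSet E R r₀ u) = E ∧
    (∀ u v : ℕ, u ≠ v → Disjoint (EpartSet E R r₀ u) (EpartSet E R r₀ v)) ∧
    (∀ u : ℕ, (E.ncard : ℝ) < 2 ^ u → EpartSet E R r₀ u = ∅) ∧
    (∀ (u : ℕ) (c : X) (r : ℝ), 1 / R ≤ r → r ≤ r₀ →
      ((EpartSet E R r₀ u ∩ Metric.closedBall c r).ncard : ℝ) ≤ 2 * R * 2 ^ u * r) := by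
  have hRinv : (0:ℝ) < 1 / R := by positivity
  refine ⟨?_, ?_, ?_, ?_⟩
  · -- union = E
    apply Set.Subset.antisymm
    · rintro x hx
      simp only [Set.mem_iUnion] at hx
      obtain ⟨u, hu⟩ := hx
      exact hu.1.1
    · intro x hxE
      set S : Set ℕ := {u | x ∈ EhatSet E R r₀ u} with hS
      have h0 : 0 ∈ S := by
        refine ⟨hxE, x, 1/R, le_refl _, hr₀, Metric.mem_closedBall_self (le_of_lt hRinv), ?_⟩
        have h1 : (1:ℝ) ≤ ((E ∩ Metric.closedBall x (1/R)).ncard : ℝ) := by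
          have : 0 < (E ∩ Metric.closedBall x (1/R)).ncard := by
            rw [Set.ncard_pos (hE.subset Set.inter_subset_left)]
            exact ⟨x, hxE, Metric.mem_closedBall_self (le_of_lt hRinv)⟩
          exact_mod_cast this
        calc R * 2 ^ 0 * (1/R) = 1 := by field_simp
        _ ≤ _ := h1
      have hbdd : BddAbove S := by
        refine ⟨E.ncard, fun u hu => ?_⟩
        by_contra h
        push_neg at h
        have : (E.ncard : ℝ) < 2 ^ u := by
          calc (E.ncard : ℝ) < 2 ^ E.ncard := by exact_mod_cast (Nat.lt_two_pow_self (n := E.ncard))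
          _ ≤ 2 ^ u := by
            apply pow_le_pow_right₀ one_le_two (le_of_lt h)
        have hu' : x ∈ EhatSet E R r₀ u := hu
        rw [Ehat_empty E hE r₀ hR this] at hu'
        exact hu'
      have hmem := Nat.sSup_mem ⟨0, h0⟩ hbdd
      simp only [Set.mem_iUnion]
      refine ⟨sSup S, hmem, ?_⟩
      simp only [Set.mem_iUnion]
      rintro ⟨u', hu', hxu'⟩
      exact absurd (le_csSup hbdd hxu') (not_le.mpr hu')
  · -- disjoint
    have key : ∀ u v : ℕ, u < v → Disjoint (EpartSet E R r₀ u) (EpartSet E R r₀ v) := by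
      intro u v huv
      rw [Set.disjoint_left]
      rintro x ⟨_, hx2⟩ ⟨hx3, _⟩
      exact hx2 (Set.mem_iUnion.mpr ⟨v, Set.mem_iUnion.mpr ⟨huv, hx3⟩⟩)
    intro u v huv
    rcases lt_or_gt_of_ne huv with h | h
    · exact key u v h
    · exact (key v u h).symm
  · -- empty
    intro u hu
    rw [EpartSet, Ehat_empty E hE r₀ hR hu, Set.empty_diff]
  · -- density
    intro u c r h1 h2
    by_contra hcon
    push_neg at hcon
    have hfin : (EpartSet E R r₀ u ∩ Metric.closedBall c r).Finite :=
      hE.subset (fun x hx => hx.1.1.1)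
    have hpos : 0 < (EpartSet E R r₀ u ∩ Metric.closedBall c r).ncard := by
      rw [Set.ncard_pos hfin]
      by_contra h
      rw [Set.not_nonempty_iff_eq_empty] at h
      rw [h] at hcon
      simp only [Set.ncard_empty, Nat.cast_zero] at hcon
      have : (0:ℝ) < 2 * R * 2 ^ u * r := by
        have hr : 0 < r := lt_of_lt_of_le hRinv h1
        positivity
      linarith
    obtain ⟨x, hx⟩ := (Set.ncard_pos hfin).mp hpos
    obtain ⟨⟨hxhat, hxnot⟩, hxball⟩ := hx
    apply hxnot
    refine Set.mem_iUnion.mpr ⟨u + 1, Set.mem_iUnion.mpr ⟨Nat.lt_succ_self u, ?_⟩⟩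
    refine ⟨hxhat.1, c, r, h1, h2, hxball, ?_⟩
    have hsub : ((EpartSet E R r₀ u ∩ Metric.closedBall c r).ncard : ℝ) ≤
        ((E ∩ Metric.closedBall c r).ncard : ℝ) := by
      exact_mod_cast Set.ncard_le_ncard
        (Set.inter_subset_inter_left _ (fun y (hy : y ∈ EpartSet E R r₀ u) => hy.1.1)) (hE.subset Set.inter_subset_left)
    have : R * 2 ^ (u+1) * r = 2 * R * 2 ^ u * r := by ring
    linarith
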